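/- Let H be a separable complex Hilbert space, let P be a bounded idempotent operator on H, and let J be a symmetry with JPJ = I - P*. Then there exist unique symmetries J₁ and J₂ such that J₁PJ₁ = I - P, J₂P ≥ 0, and J = -i J₁ J₂ = i J₂ J₁ (where i = √(-1)). -/

import Mathlib

set_option maxHeartbeats 1000000
set_option synthInstance.maxHeartbeats 400000

open ContinuousLinearMap

variable {H : Type*} [NormedAddCommGroup H] [InnerProductSpace ℂ H]
  [CompleteSpace H] [TopologicalSpace.SeparableSpace H]

/-- The absolute value `|A| = (A*A)^(1/2)` of a bounded operator. -/
noncomputable def absOp (A : H →L[ℂ] H) : H →L[ℂ] H := CFC.sqrt (star A * A)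

/-- A symmetry is a self-adjoint unitary: `J = J* = J⁻¹`. -/
def IsSymmetry (J : H →L[ℂ] H) : Prop := IsSelfAdjoint J ∧ J * J = 1

open Polynomial in
private lemma commute_cfc' {a b : H →L[ℂ] H} (ha : IsSelfAdjoint a) (hb : b * a = a * b)
    (f : ℝ → ℝ) : b * cfc f a = cfc f a * b := by
  by_cases hf : ContinuousOn f (spectrum ℝ a)
  · have key : ∀ g : C(spectrum ℝ a, ℝ), b * cfcHom ha g = cfcHom ha g * b := by
      have hsub : (⊤ : Subalgebra ℝ C(spectrum ℝ a, ℝ)) ≤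
          (Subalgebra.centralizer ℝ {b}).comap (cfcHom ha (R := ℝ)).toAlgHom := by
        rw [← polynomialFunctions.topologicalClosure (spectrum ℝ a)]
        apply Subalgebra.topologicalClosure_minimal
        · rintro g hg
          obtain ⟨p, -, rfl⟩ := hg
          have hcomm : Commute b (aeval a p) := by
            induction p using Polynomial.induction_on with
            | C r => simp only [aeval_C]; exact (Algebra.commutes r b).symm
            | add p q hp hq => simp only [map_add]; exact hp.add_right hq
            | monomial n r _ =>
              simp only [map_mul, aeval_C, map_pow, aeval_X]
              have c1 : Commute b ((algebraMap ℝ (H →L[ℂ] H)) r) :=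
                (Algebra.commutes r b).symm
              have c2 : Commute b a := hb
              exact c1.mul_right (c2.pow_right (n + 1))
          have hcp : cfcHom ha (R := ℝ) ((toContinuousMapOnAlgHom (spectrum ℝ a)) p)
              = aeval a p := by
            have h1 : cfc p.eval a = aeval a p := cfc_polynomial p a ha
            rw [cfc_apply p.eval a ha (p.continuous_aeval.continuousOn)] at h1
            rw [← h1]
            congr 1
          simp only [Subalgebra.mem_comap, Subalgebra.mem_centralizer_iff,
            Set.mem_singleton_iff, forall_eq]
          show b * cfcHom ha (R := ℝ) ((toContinuousMapOnAlgHom (spectrum ℝ a)) p)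
            = cfcHom ha (R := ℝ) ((toContinuousMapOnAlgHom (spectrum ℝ a)) p) * b
          rw [hcp]
          exact hcomm.eq
        · have hc : Continuous (cfcHom ha (R := ℝ) : C(spectrum ℝ a, ℝ) → H →L[ℂ] H) :=
            (cfcHom_isClosedEmbedding ha).continuous
          have hset : ((Subalgebra.centralizer ℝ {b}).comap
                (cfcHom ha (R := ℝ)).toAlgHom : Set C(spectrum ℝ a, ℝ))
              = {g | b * cfcHom ha g = cfcHom ha g * b} := by
            ext g
            simp only [SetLike.mem_coe, Subalgebra.mem_comap, Subalgebra.mem_centralizer_iff,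
              Set.mem_singleton_iff, forall_eq, Set.mem_setOf_eq]
            rfl
          rw [hset]
          exact isClosed_eq (continuous_const.mul hc) (hc.mul continuous_const)
      intro g
      have hg := hsub (show g ∈ (⊤ : Subalgebra ℝ C(spectrum ℝ a, ℝ)) by trivial)
      simp only [Subalgebra.mem_comap, Subalgebra.mem_centralizer_iff,
        Set.mem_singleton_iff, forall_eq] at hg
      exact hg
    rw [cfc_apply f a ha hf]
    exact key _
  · rw [cfc_apply_of_not_continuousOn a hf]
    simp

private lemma mul_nonneg_of_commute' {T S : H →L[ℂ] H} (hT : 0 ≤ T) (hS : 0 ≤ S)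
    (h : T * S = S * T) : 0 ≤ T * S := by
  have hTsa : IsSelfAdjoint T := IsSelfAdjoint.of_nonneg hT
  have hspec : ∀ x ∈ spectrum ℝ T, (0 : ℝ) ≤ x :=
    (StarOrderedRing.nonneg_iff_spectrum_nonneg (R := ℝ) T).mp hT
  set R := cfc Real.sqrt T with hR
  have hRsa : IsSelfAdjoint R := cfc_predicate _ T
  have hRS : S * R = R * S := commute_cfc' hTsa h.symm Real.sqrt
  have hRR : R * R = T := by
    rw [hR, ← cfc_mul Real.sqrt Real.sqrt T Real.continuous_sqrt.continuousOn
      Real.continuous_sqrt.continuousOn]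
    have h2 : cfc (fun x => Real.sqrt x * Real.sqrt x) T = cfc (id : ℝ → ℝ) T :=
      cfc_congr (fun x hx => Real.mul_self_sqrt (hspec x hx))
    rw [h2, cfc_id ℝ T]
  have key : T * S = R * S * R := by
    calc T * S = R * (R * S) := by rw [← mul_assoc, hRR]
    _ = R * (S * R) := by rw [hRS]
    _ = R * S * R := by rw [mul_assoc]
  rw [key]
  have h3 := star_right_conjugate_nonneg hS R
  rwa [hRsa.star_eq] at h3

theorem stmt_14 (P J : H →L[ℂ] H) (hP : P * P = P) (hJ : IsSymmetry J)
    (hJP : J * P * J = 1 - star P) :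
    ∃! p : (H →L[ℂ] H) × (H →L[ℂ] H),
      IsSymmetry p.1 ∧ IsSymmetry p.2 ∧ p.1 * P * p.1 = 1 - P ∧ (p.2 * P).IsPositive ∧
      J = -(Complex.I • (p.1 * p.2)) ∧ J = Complex.I • (p.2 * p.1) := by
  obtain ⟨hJsa, hJ2⟩ := hJ
  have hP' : star P * star P = star P := by rw [← star_mul, hP]
  have hJP' : J * star P * J = 1 - P := by
    have h := congrArg star hJP
    rw [star_mul, star_mul, hJsa.star_eq, star_sub, star_one, star_star] at h
    rw [← mul_assoc] at h
    exact h
  have hJP2 : J * P = (1 - star P) * J := by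
    have h : J * P * J * J = (1 - star P) * J := by rw [hJP]
    rwa [mul_assoc, hJ2, mul_one] at h
  have hJPs2 : J * star P = (1 - P) * J := by
    have h : J * star P * J * J = (1 - P) * J := by rw [hJP']
    rwa [mul_assoc, hJ2, mul_one] at h
  obtain ⟨B, hB⟩ : ∃ B : H →L[ℂ] H, B = P + star P - 1 := ⟨_, rfl⟩
  have hBsa : IsSelfAdjoint B := by
    rw [IsSelfAdjoint, hB, star_sub, star_add, star_star, star_one]
    abel
  -- word lemmas
  have hPB : P * B = P * star P := by
    rw [hB]
    calc P * (P + star P - 1) = P * P + P * star P - P := by noncomm_ring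
    _ = P * star P := by rw [hP]; abel
  have hBP : B * P = star P * P := by
    rw [hB]
    calc (P + star P - 1) * P = P * P + star P * P - P := by noncomm_ring
    _ = star P * P := by rw [hP]; abel
  have hPsB : star P * B = star P * P := by
    rw [hB]
    calc star P * (P + star P - 1) = star P * P + star P * star P - star P := by noncomm_ring
    _ = star P * P := by rw [hP']; abel
  have hBPs : B * star P = P * star P := by
    rw [hB]
    calc (P + star P - 1) * star P = P * star P + star P * star P - star P := by noncomm_ring
    _ = P * star P := by rw [hP']; abel
  obtain ⟨X, hX⟩ : ∃ X : H →L[ℂ] H, X = B * B := ⟨_, rfl⟩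
  have hXsa : IsSelfAdjoint X := by
    rw [IsSelfAdjoint, hX, star_mul, hBsa.star_eq]
  have hXpos : 0 ≤ X := by
    have h := star_mul_self_nonneg B
    rwa [hBsa.star_eq, ← hX] at h
  have hX1 : (1 : H →L[ℂ] H) ≤ X := by
    have expand : X = P * star P + star P * P - P - star P + 1 := by
      rw [hX, hB]
      calc (P + star P - 1) * (P + star P - 1)
          = P * P + P * star P + star P * P + star P * star P
            - P - star P - P - star P + 1 := by noncomm_ring
      _ = P * star P + star P * P - P - star P + 1 := by rw [hP, hP']; abel
    have expand2 : star (P - star P) * (P - star P)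
        = P * star P + star P * P - P - star P := by
      rw [star_sub, star_star]
      calc (star P - P) * (P - star P)
          = star P * P - star P * star P - P * P + P * star P := by noncomm_ring
      _ = P * star P + star P * P - P - star P := by rw [hP, hP']; abel
    have hXeq : X = 1 + star (P - star P) * (P - star P) := by
      rw [expand, expand2]; abel
    rw [hXeq]
    exact le_add_of_nonneg_right (star_mul_self_nonneg _)
  have hXspec : ∀ x ∈ spectrum ℝ X, (1 : ℝ) ≤ x := (CFC.one_le_iff (R := ℝ) X hXsa).mp hX1
  -- the inverse square root of X
  obtain ⟨f, hfdef⟩ : ∃ f : ℝ → ℝ, f = fun x => (Real.sqrt (max x 1))⁻¹ := ⟨_, rfl⟩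
  have hfc : Continuous f := by
    rw [hfdef]
    apply Continuous.inv₀
    · exact Real.continuous_sqrt.comp (continuous_id.max continuous_const)
    · intro x
      exact ne_of_gt (Real.sqrt_pos.mpr (lt_of_lt_of_le one_pos (le_max_right x 1)))
  obtain ⟨S, hS⟩ : ∃ S : H →L[ℂ] H, S = cfc f X := ⟨_, rfl⟩
  have hSsa : IsSelfAdjoint S := hS ▸ cfc_predicate f X
  have hSpos : 0 ≤ S := by
    rw [hS]
    exact cfc_nonneg (fun x _ => by rw [hfdef]; positivity)
  have hXS : X * (S * S) = 1 := by
    have hSS : S * S = cfc (fun x => f x * f x) X := by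
      rw [hS]
      exact (cfc_mul f f X hfc.continuousOn hfc.continuousOn).symm
    have hXSS : X * (S * S) = cfc (fun x : ℝ => x * (f x * f x)) X := by
      rw [hSS]
      nth_rewrite 1 [← cfc_id' ℝ X hXsa]
      rw [← cfc_mul (fun x : ℝ => x) (fun x => f x * f x) X continuousOn_id
        ((hfc.mul hfc).continuousOn)]
    have congr1 : cfc (fun x : ℝ => x * (f x * f x)) X = cfc (1 : ℝ → ℝ) X := by
      apply cfc_congr
      intro x hx
      have h1x := hXspec x hx
      have hx0 : (0 : ℝ) < x := lt_of_lt_of_le one_pos h1x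
      simp only [hfdef, Pi.one_apply]
      rw [max_eq_left h1x, ← mul_inv, Real.mul_self_sqrt hx0.le, mul_inv_cancel₀ hx0.ne']
    rw [hXSS, congr1, cfc_one (R := ℝ) (a := X) hXsa]
  -- commutation with S
  have hXP : P * X = X * P := by
    calc P * X = P * B * B := by rw [hX, ← mul_assoc]
    _ = P * star P * B := by rw [hPB]
    _ = P * (star P * B) := by rw [mul_assoc]
    _ = P * (star P * P) := by rw [hPsB]
    _ = P * star P * P := by rw [← mul_assoc]
    _ = B * star P * P := by rw [hBPs]
    _ = B * (star P * P) := by rw [mul_assoc]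
    _ = B * (B * P) := by rw [hBP]
    _ = X * P := by rw [hX, ← mul_assoc]
  have hPsX : star P * X = X * star P := by
    calc star P * X = star P * B * B := by rw [hX, ← mul_assoc]
    _ = star P * P * B := by rw [hPsB]
    _ = star P * (P * B) := by rw [mul_assoc]
    _ = star P * (P * star P) := by rw [hPB]
    _ = star P * P * star P := by rw [← mul_assoc]
    _ = B * P * star P := by rw [hBP]
    _ = B * (P * star P) := by rw [mul_assoc]
    _ = B * (B * star P) := by rw [hBPs]
    _ = X * star P := by rw [hX, ← mul_assoc]
  have hBX : B * X = X * B := by rw [hX, ← mul_assoc]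
  have hJB : J * B = -(B * J) := by
    have h1 : J * B = J * P + J * star P - J := by rw [hB]; noncomm_ring
    rw [h1, hJP2, hJPs2, hB]; noncomm_ring
  have hJX : J * X = X * J := by
    calc J * X = (J * B) * B := by rw [hX, ← mul_assoc]
    _ = (-(B * J)) * B := by rw [hJB]
    _ = -(B * (J * B)) := by noncomm_ring
    _ = -(B * (-(B * J))) := by rw [hJB]
    _ = B * B * J := by noncomm_ring
    _ = X * J := by rw [hX]
  have hSP : P * S = S * P := by rw [hS]; exact commute_cfc' hXsa hXP f
  have hSPs : star P * S = S * star P := by rw [hS]; exact commute_cfc' hXsa hPsX f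
  have hSB : B * S = S * B := by rw [hS]; exact commute_cfc' hXsa hBX f
  have hSJ : J * S = S * J := by rw [hS]; exact commute_cfc' hXsa hJX f
  -- the symmetry J₂
  obtain ⟨J₂, hJ₂def⟩ : ∃ Y : H →L[ℂ] H, Y = B * S := ⟨_, rfl⟩
  have hJ₂sa : IsSelfAdjoint J₂ := by
    rw [IsSelfAdjoint, hJ₂def, star_mul, hSsa.star_eq, hBsa.star_eq]
    exact hSB.symm
  have hJ₂2 : J₂ * J₂ = 1 := by
    calc J₂ * J₂ = B * (S * B) * S := by rw [hJ₂def]; noncomm_ring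
    _ = B * (B * S) * S := by rw [hSB]
    _ = X * (S * S) := by rw [hX]; noncomm_ring
    _ = 1 := hXS
  have hJ₂P : J₂ * P = star P * P * S := by
    calc J₂ * P = B * (S * P) := by rw [hJ₂def, mul_assoc]
    _ = B * (P * S) := by rw [hSP]
    _ = star P * P * S := by rw [← mul_assoc, hBP]
  have hSPP : star P * P * S = S * (star P * P) := by
    calc star P * P * S = star P * (P * S) := by rw [mul_assoc]
    _ = star P * (S * P) := by rw [hSP]
    _ = (star P * S) * P := by rw [mul_assoc]
    _ = (S * star P) * P := by rw [hSPs]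
    _ = S * (star P * P) := by rw [mul_assoc]
  have hJ₂Ppos : 0 ≤ J₂ * P := by
    rw [hJ₂P]
    exact mul_nonneg_of_commute' (star_mul_self_nonneg P) hSpos hSPP
  have hPsX2 : star P * X = star P * (P * star P) := by
    rw [hX, ← mul_assoc, hPsB, mul_assoc, hPB]
  have hJ₂PJ₂ : J₂ * P * J₂ = star P := by
    calc J₂ * P * J₂ = star P * P * S * (B * S) := by rw [hJ₂P, hJ₂def]
    _ = star P * P * (S * B) * S := by noncomm_ring
    _ = star P * P * (B * S) * S := by rw [hSB]
    _ = star P * (P * B) * (S * S) := by noncomm_ring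
    _ = star P * (P * star P) * (S * S) := by rw [hPB]
    _ = star P * (X * (S * S)) := by rw [← hPsX2]; noncomm_ring
    _ = star P := by rw [hXS, mul_one]
  have hJJ₂ : J * J₂ = -(J₂ * J) := by
    calc J * J₂ = (J * B) * S := by rw [hJ₂def, mul_assoc]
    _ = -(B * (J * S)) := by rw [hJB]; noncomm_ring
    _ = -(B * (S * J)) := by rw [hSJ]
    _ = -(J₂ * J) := by rw [hJ₂def]; noncomm_ring
  have hJ₂J : J₂ * J = -(J * J₂) := by rw [hJJ₂, neg_neg]
  -- the symmetry J₁
  obtain ⟨J₁, hJ₁def⟩ : ∃ Y : H →L[ℂ] H, Y = Complex.I • (J * J₂) := ⟨_, rfl⟩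
  have hJ₁sa : IsSelfAdjoint J₁ := by
    rw [IsSelfAdjoint, hJ₁def, star_smul, star_mul, hJsa.star_eq, hJ₂sa.star_eq, hJ₂J]
    simp [Complex.conj_I]
  have hJ₁2 : J₁ * J₁ = 1 := by
    rw [hJ₁def, smul_mul_assoc, mul_smul_comm, smul_smul, Complex.I_mul_I]
    have core : J * J₂ * (J * J₂) = -1 := by
      calc J * J₂ * (J * J₂) = J * (J₂ * J) * J₂ := by noncomm_ring
      _ = J * (-(J * J₂)) * J₂ := by rw [hJ₂J]
      _ = -(J * J * (J₂ * J₂)) := by noncomm_ring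
      _ = -1 := by rw [hJ2, hJ₂2, one_mul]
    rw [core]
    simp
  have hJ₂P2 : J₂ * P = star P * J₂ := by
    have h : J₂ * P * J₂ * J₂ = star P * J₂ := by rw [hJ₂PJ₂]
    rwa [mul_assoc, hJ₂2, mul_one] at h
  have hJ₁PJ₁ : J₁ * P * J₁ = 1 - P := by
    rw [hJ₁def, smul_mul_assoc, smul_mul_assoc, mul_smul_comm, smul_smul, Complex.I_mul_I]
    have core : J * J₂ * P * (J * J₂) = -(1 - P) := by
      calc J * J₂ * P * (J * J₂) = J * (J₂ * P) * (J * J₂) := by noncomm_ring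
      _ = J * (star P * J₂) * (J * J₂) := by rw [hJ₂P2]
      _ = J * star P * (J₂ * J) * J₂ := by noncomm_ring
      _ = J * star P * (-(J * J₂)) * J₂ := by rw [hJ₂J]
      _ = -((J * star P * J) * (J₂ * J₂)) := by noncomm_ring
      _ = -(1 - P) := by rw [hJ₂2, mul_one, hJP']
    rw [core]
    simp
  have goal1 : J = -(Complex.I • (J₁ * J₂)) := by
    have h : J₁ * J₂ = Complex.I • J := by
      rw [hJ₁def, smul_mul_assoc, mul_assoc, hJ₂2, mul_one]
    rw [h, smul_smul, Complex.I_mul_I]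
    simp
  have goal2 : J = Complex.I • (J₂ * J₁) := by
    have h : J₂ * J₁ = Complex.I • (-J) := by
      rw [hJ₁def, mul_smul_comm]
      congr 1
      calc J₂ * (J * J₂) = (J₂ * J) * J₂ := by rw [mul_assoc]
      _ = (-(J * J₂)) * J₂ := by rw [hJ₂J]
      _ = -(J * (J₂ * J₂)) := by noncomm_ring
      _ = -J := by rw [hJ₂2, mul_one]
    rw [h, smul_smul, Complex.I_mul_I]
    simp
  -- square root characterization used for uniqueness
  have sqrt_char : ∀ K : H →L[ℂ] H, IsSelfAdjoint K → K * K = 1 → 0 ≤ K * P →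
      CFC.sqrt (star P * P) = K * P := by
    intro K hKsa hK2 h0
    have hKsa' : IsSelfAdjoint (K * P) := IsSelfAdjoint.of_nonneg h0
    have hmul : (K * P) * (K * P) = star P * P := by
      nth_rewrite 1 [← hKsa'.star_eq]
      rw [star_mul, hKsa.star_eq]
      calc star P * K * (K * P) = star P * (K * K) * P := by noncomm_ring
      _ = star P * P := by rw [hK2, mul_one]
    exact CFC.sqrt_unique hmul h0
  -- assemble
  refine ⟨(J₁, J₂), ⟨⟨hJ₁sa, hJ₁2⟩, ⟨hJ₂sa, hJ₂2⟩, hJ₁PJ₁,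
    (nonneg_iff_isPositive _).mp hJ₂Ppos, goal1, goal2⟩, ?_⟩
  rintro ⟨K₁, K₂⟩ ⟨⟨hK₁sa, hK₁2⟩, ⟨hK₂sa, hK₂2⟩, hK₁P, hK₂Ppos, hJa, hJb⟩
  have hK₂Ppos' : 0 ≤ K₂ * P := (nonneg_iff_isPositive _).mpr hK₂Ppos
  have hK₂P_eq : K₂ * P = J₂ * P := by
    rw [← sqrt_char K₂ hK₂sa hK₂2 hK₂Ppos', ← sqrt_char J₂ hJ₂sa hJ₂2 hJ₂Ppos]
  -- K₂ anticommutes with J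
  have hK₂J : K₂ * J = Complex.I • K₁ := by
    rw [hJb, mul_smul_comm, ← mul_assoc, hK₂2, one_mul]
  have hJK₂ : J * K₂ = -(Complex.I • K₁) := by
    rw [hJa, neg_mul, smul_mul_assoc, mul_assoc, hK₂2, mul_one]
  have hJK₂' : K₂ * J = -(J * K₂) := by rw [hJK₂, hK₂J, neg_neg]
  -- both K₂ and J₂ agree on `1 - star P`
  have key : ∀ K : H →L[ℂ] H, K * J = -(J * K) →
      K * (1 - star P) = -(J * (K * P) * J) := by
    intro K hKJ
    calc K * (1 - star P) = K * (J * P * J) := by rw [← hJP]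
    _ = K * J * P * J := by noncomm_ring
    _ = -(J * K) * P * J := by rw [hKJ]
    _ = -(J * (K * P) * J) := by noncomm_ring
  have hJ₂J' : J₂ * J = -(J * J₂) := hJ₂J
  have hagree : K₂ * (1 - star P) = J₂ * (1 - star P) := by
    rw [key K₂ hJK₂', key J₂ hJ₂J', hK₂P_eq]
  -- conclude K₂ = J₂
  have h2 : (K₂ - J₂) * P = 0 := by rw [sub_mul, hK₂P_eq, sub_self]
  have h1 : (K₂ - J₂) * (1 - star P) = 0 := by rw [sub_mul, hagree, sub_self]
  have h3 : K₂ - J₂ = (K₂ - J₂) * star P := by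
    have h1' := h1
    rw [mul_sub, mul_one, sub_eq_zero] at h1'
    exact h1'
  have h5 : star (K₂ - J₂) = P * star (K₂ - J₂) := by
    conv_lhs => rw [h3]
    rw [star_mul, star_star]
  have h4 : (K₂ - J₂) * star (K₂ - J₂) = 0 := by
    rw [h5, ← mul_assoc, h2, zero_mul]
  have hK₂eq : K₂ = J₂ := by
    have h6 : star (star (K₂ - J₂)) * star (K₂ - J₂) = 0 := by rwa [star_star]
    have h7 := (CStarRing.star_mul_self_eq_zero_iff (star (K₂ - J₂))).mp h6
    have h8 : K₂ - J₂ = 0 := by simpa using congrArg star h7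
    exact sub_eq_zero.mp h8
  have hK₁eq : K₁ = J₁ := by
    have h9 : Complex.I • (J * K₂) = K₁ := by
      rw [hJK₂, smul_neg, smul_smul, Complex.I_mul_I]
      simp
    rw [← h9, hK₂eq, ← hJ₁def]
  exact Prod.ext hK₁eq hK₂eq
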